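/- For all real angles φ, θ, ψ and every l ∈ ℝ, the quaternion position formula evaluated at the Euler-angle quaternion q(φ,θ,ψ) = (q0,q1,q2,q3) reproduces the Euler-angle position formula: l·(q0² + q1² − q2² − q3², 2(q0q3 + q1q2), 2(q1q3 − q0q2)) = l·(cos θ, sin φ·sin θ, −cos φ·sin θ). In particular the position is independent of the bearing angle ψ. -/

import Mathlib

open Real

/-- The Euler-angle quaternion `q(φ,θ,ψ)` as a vector in ℝ⁴. -/
noncomputable def eulerQuat (φ θ ψ : ℝ) : EuclideanSpace ℝ (Fin 4) :=
  WithLp.toLp 2 ![cos (φ / 2) * cos (θ / 2) * cos (ψ / 2)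
      + sin (φ / 2) * cos (θ / 2) * sin (ψ / 2),
    sin (φ / 2) * cos (θ / 2) * cos (ψ / 2)
      - cos (φ / 2) * cos (θ / 2) * sin (ψ / 2),
    -(sin (φ / 2) * sin (θ / 2) * sin (ψ / 2))
      + cos (φ / 2) * sin (θ / 2) * cos (ψ / 2),
    sin (φ / 2) * sin (θ / 2) * cos (ψ / 2)
      + cos (φ / 2) * sin (θ / 2) * sin (ψ / 2)]

/-- The quaternion position formula evaluated at the Euler-angle quaternion reproduces
the Euler-angle position formula; in particular it is independent of the bearing `ψ`. -/
theorem eulerQuat_position (φ θ ψ : ℝ) (l : ℝ) :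
    l • (WithLp.toLp 2 ![eulerQuat φ θ ψ 0 ^ 2 + eulerQuat φ θ ψ 1 ^ 2
            - eulerQuat φ θ ψ 2 ^ 2 - eulerQuat φ θ ψ 3 ^ 2,
          2 * (eulerQuat φ θ ψ 0 * eulerQuat φ θ ψ 3
            + eulerQuat φ θ ψ 1 * eulerQuat φ θ ψ 2),
          2 * (eulerQuat φ θ ψ 1 * eulerQuat φ θ ψ 3
            - eulerQuat φ θ ψ 0 * eulerQuat φ θ ψ 2)] : EuclideanSpace ℝ (Fin 3)) =
    l • (WithLp.toLp 2 ![cos θ, sin φ * sin θ, -(cos φ * sin θ)] : EuclideanSpace ℝ (Fin 3)) := by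
  have hct : cos θ = cos (θ/2)^2 - sin (θ/2)^2 := by
    rw [show θ = 2*(θ/2) by ring, cos_two_mul']; norm_num
  have hst : sin θ = 2 * sin (θ/2) * cos (θ/2) := by
    rw [show θ = 2*(θ/2) by ring, sin_two_mul]; norm_num
  have hcf : cos φ = cos (φ/2)^2 - sin (φ/2)^2 := by
    rw [show φ = 2*(φ/2) by ring, cos_two_mul']; norm_num
  have hsf : sin φ = 2 * sin (φ/2) * cos (φ/2) := by
    rw [show φ = 2*(φ/2) by ring, sin_two_mul]; norm_num
  have hψ : sin (ψ/2)^2 + cos (ψ/2)^2 = 1 := sin_sq_add_cos_sq _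
  have hφ2 : sin (φ/2)^2 + cos (φ/2)^2 = 1 := sin_sq_add_cos_sq _
  congr 2
  funext i
  fin_cases i <;> simp [eulerQuat]
  · linear_combination (cos (θ/2)^2 - sin (θ/2)^2) *
      ((cos (φ/2)^2 + sin (φ/2)^2) * hψ + hφ2) - hct
  · linear_combination 4 * cos (θ/2) * sin (θ/2) * cos (φ/2) * sin (φ/2) * hψ
      - 2 * sin (φ/2) * cos (φ/2) * hst - sin θ * hsf
  · linear_combination 2 * cos (θ/2) * sin (θ/2) * (sin (φ/2)^2 - cos (φ/2)^2) * hψ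
      + (cos (φ/2)^2 - sin (φ/2)^2) * hst + sin θ * hcf
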